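/- Let N_T, d, N_y ≥ 1 be integers, Δt a nonzero real number and p ∈ ℝ. Let 𝔸, 𝕄, M^Γ be d×d complex matrices and Q_a, Q_b be N_y×d complex matrices, and let α ∈ ℂ. Let 𝐀 be the N_T×N_T block matrix with d×d blocks whose diagonal blocks all equal 𝔸, whose (n,s) block for s < n is (−1)^{n−s}·(4i/Δt)·𝕄, and whose blocks above the diagonal are zero, and set 𝐁 = −ip·blockdiag_{N_T}(M^Γ). Assume 𝐀 − 𝐁 is invertible. Then X := α·I − 2ip·blockdiag_{N_T}(Q_a)·(𝐀 − 𝐁)^{−1}·blockdiag_{N_T}(M^Γ)·blockdiag_{N_T}(Q_b)^⊤, viewed as an N_T×N_T block matrix with N_y×N_y blocks x_{n,s}, is block lower triangular and satisfies x_{n,s} = x_{n−1,s−1} for all 2 ≤ s ≤ n ≤ N_T. -/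
import Mathlib


open Matrix Complex

/-- An `N×N` block matrix with `a×b` blocks is block lower triangular if all
blocks strictly above the diagonal vanish. -/
def IsBlockLowerTriangular {N a b : ℕ}
    (X : Matrix (Fin N × Fin a) (Fin N × Fin b) ℂ) : Prop :=
  ∀ (n s : Fin N) (i : Fin a) (j : Fin b), n < s → X (n, i) (s, j) = 0

/-- The `N×N` block diagonal matrix all of whose diagonal blocks equal `P`. -/
def blockdiag (N : ℕ) {a b : ℕ} (P : Matrix (Fin a) (Fin b) ℂ) :
    Matrix (Fin N × Fin a) (Fin N × Fin b) ℂ :=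
  fun x y => if x.1 = y.1 then P x.2 y.2 else 0

/-- The global-in-time Crank–Nicolson matrix `𝐀` with constant diagonal block `𝔸`,
subdiagonal `(n,s)` blocks `(-1)^(n-s) (4i/Δt) 𝕄` for `s < n`, and zero blocks
above the diagonal. -/
noncomputable def bigA (N_T d : ℕ) (Δt : ℝ) (𝔸 𝕄 : Matrix (Fin d) (Fin d) ℂ) :
    Matrix (Fin N_T × Fin d) (Fin N_T × Fin d) ℂ :=
  fun x y =>
    if x.1 = y.1 then 𝔸 x.2 y.2
    else if y.1 < x.1 then
      (-1 : ℂ) ^ ((x.1 : ℕ) - (y.1 : ℕ)) * (4 * Complex.I / (Δt : ℂ)) * 𝕄 x.2 y.2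
    else 0

/-- block lower triangular Toeplitz structure -/
def Struct {N a b : ℕ} (X : Matrix (Fin N × Fin a) (Fin N × Fin b) ℂ) : Prop :=
  ∃ f : ℕ → Matrix (Fin a) (Fin b) ℂ,
    ∀ (n s : Fin N) (i : Fin a) (j : Fin b),
      X (n, i) (s, j) = if (s : ℕ) ≤ (n : ℕ) then f ((n : ℕ) - (s : ℕ)) i j else 0

lemma struct_blockdiag {N a b : ℕ} (P : Matrix (Fin a) (Fin b) ℂ) :
    Struct (blockdiag N P) := by
  refine ⟨fun k => if k = 0 then P else 0, fun n s i j => ?_⟩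
  simp only [blockdiag]
  by_cases h : n = s
  · subst h; simp
  · have h' : (n : ℕ) ≠ (s : ℕ) := fun hc => h (Fin.ext hc)
    rw [if_neg h]
    by_cases h2 : (s : ℕ) ≤ (n : ℕ)
    · have h3 : (n : ℕ) - (s : ℕ) ≠ 0 := by omega
      simp [h2, h3]
    · simp [h2]

lemma struct_one {N a : ℕ} : Struct (1 : Matrix (Fin N × Fin a) (Fin N × Fin a) ℂ) := by
  refine ⟨fun k => if k = 0 then 1 else 0, fun n s i j => ?_⟩
  rw [Matrix.one_apply]
  by_cases h : n = s
  · subst h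
    simp [Prod.ext_iff, Matrix.one_apply]
  · have h' : (n : ℕ) ≠ (s : ℕ) := fun hc => h (Fin.ext hc)
    have hp : ((n, i) : Fin N × Fin a) ≠ (s, j) := fun hc => h (congrArg Prod.fst hc)
    rw [if_neg hp]
    by_cases h2 : (s : ℕ) ≤ (n : ℕ)
    · have h3 : (n : ℕ) - (s : ℕ) ≠ 0 := by omega
      simp [h2, h3]
    · simp [h2]

lemma Struct.zero {N a b : ℕ} : Struct (0 : Matrix (Fin N × Fin a) (Fin N × Fin b) ℂ) :=
  ⟨fun _ => 0, fun n s i j => by simp⟩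

lemma Struct.add {N a b : ℕ} {X Y : Matrix (Fin N × Fin a) (Fin N × Fin b) ℂ}
    (hX : Struct X) (hY : Struct Y) : Struct (X + Y) := by
  obtain ⟨f, hf⟩ := hX; obtain ⟨g, hg⟩ := hY
  refine ⟨fun k => f k + g k, fun n s i j => ?_⟩
  simp only [Matrix.add_apply, hf, hg]
  by_cases h2 : (s : ℕ) ≤ (n : ℕ) <;> simp [h2]

lemma Struct.smul {N a b : ℕ} {c : ℂ} {X : Matrix (Fin N × Fin a) (Fin N × Fin b) ℂ}
    (hX : Struct X) : Struct (c • X) := by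
  obtain ⟨f, hf⟩ := hX
  refine ⟨fun k => c • f k, fun n s i j => ?_⟩
  simp only [Matrix.smul_apply, hf, smul_eq_mul]
  by_cases h2 : (s : ℕ) ≤ (n : ℕ) <;> simp [h2]

lemma Struct.neg {N a b : ℕ} {X : Matrix (Fin N × Fin a) (Fin N × Fin b) ℂ}
    (hX : Struct X) : Struct (-X) := by
  have := hX.smul (c := (-1 : ℂ)); simpa using this

lemma Struct.sub {N a b : ℕ} {X Y : Matrix (Fin N × Fin a) (Fin N × Fin b) ℂ}
    (hX : Struct X) (hY : Struct Y) : Struct (X - Y) := by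
  have := hX.add hY.neg; simpa [sub_eq_add_neg] using this

lemma Struct.mul {N a b c : ℕ} {X : Matrix (Fin N × Fin a) (Fin N × Fin b) ℂ}
    {Y : Matrix (Fin N × Fin b) (Fin N × Fin c) ℂ}
    (hX : Struct X) (hY : Struct Y) : Struct (X * Y) := by
  obtain ⟨f, hf⟩ := hX; obtain ⟨g, hg⟩ := hY
  refine ⟨fun t => ∑ u ∈ Finset.range (t + 1), f (t - u) * g u, fun n s i j => ?_⟩
  rw [Matrix.mul_apply, Fintype.sum_prod_type]
  simp only [hf, hg]
  set F : ℕ → ℂ := fun m => ∑ k : Fin b,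
    (if m ≤ (n : ℕ) then f ((n : ℕ) - m) i k else 0) *
      (if (s : ℕ) ≤ m then g (m - (s : ℕ)) k j else 0) with hF
  have hsum : (∑ m : Fin N, ∑ k : Fin b,
      (if (m : ℕ) ≤ (n : ℕ) then f ((n : ℕ) - (m : ℕ)) i k else 0) *
        (if (s : ℕ) ≤ (m : ℕ) then g ((m : ℕ) - (s : ℕ)) k j else 0))
      = ∑ m ∈ Finset.range N, F m := by
    rw [← Fin.sum_univ_eq_sum_range F N]
  rw [hsum]
  by_cases hns : (s : ℕ) ≤ (n : ℕ)
  · rw [if_pos hns]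
    have hsub : Finset.Icc (s : ℕ) (n : ℕ) ⊆ Finset.range N := by
      intro m hm
      simp only [Finset.mem_Icc] at hm
      exact Finset.mem_range.mpr (lt_of_le_of_lt hm.2 n.isLt)
    rw [← Finset.sum_subset hsub (fun m _ hm => ?_)]
    · rw [← Finset.Ico_add_one_right_eq_Icc, Finset.sum_Ico_eq_sum_range]
      rw [Matrix.sum_apply]
      have hcard : (n : ℕ) + 1 - (s : ℕ) = (n : ℕ) - (s : ℕ) + 1 := by omega
      rw [hcard]
      refine Finset.sum_congr rfl (fun u hu => ?_)
      have hu' : u ≤ (n : ℕ) - (s : ℕ) := by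
        simpa [Nat.lt_succ_iff] using Finset.mem_range.mp hu
      rw [Matrix.mul_apply, hF]
      simp only
      refine Finset.sum_congr rfl (fun k _ => ?_)
      have c1 : (s : ℕ) + u ≤ (n : ℕ) := by omega
      have c2 : (s : ℕ) ≤ (s : ℕ) + u := by omega
      have c3 : (n : ℕ) - ((s : ℕ) + u) = (n : ℕ) - (s : ℕ) - u := by omega
      have c4 : (s : ℕ) + u - (s : ℕ) = u := by omega
      simp [c1, c2, c3, c4]
    · simp only [Finset.mem_Icc, not_and_or, not_le] at hm
      rw [hF]
      refine Finset.sum_eq_zero (fun k _ => ?_)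
      rcases hm with hm | hm
      · have : ¬ ((s : ℕ) ≤ m) := by omega
        simp [this]
      · have : ¬ (m ≤ (n : ℕ)) := by omega
        simp [this]
  · rw [if_neg hns]
    refine Finset.sum_eq_zero (fun m _ => Finset.sum_eq_zero (fun k _ => ?_))
    by_cases h1 : m ≤ (n : ℕ)
    · have : ¬ ((s : ℕ) ≤ m) := by omega
      simp [this]
    · simp [h1]

lemma Struct.inv {N d : ℕ} {A : Matrix (Fin N × Fin d) (Fin N × Fin d) ℂ}
    (hA : Struct A) (h : IsUnit A) : Struct A⁻¹ := by
  have hdet : IsUnit A.det := (Matrix.isUnit_iff_isUnit_det A).mp h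
  set S : Submodule ℂ (Matrix (Fin N × Fin d) (Fin N × Fin d) ℂ) :=
    { carrier := {X | Struct X}
      add_mem' := fun hx hy => hx.add hy
      zero_mem' := Struct.zero
      smul_mem' := fun c _ hx => hx.smul } with hS
  set L : S →ₗ[ℂ] S :=
    { toFun := fun x => ⟨A * x.1, hA.mul x.2⟩
      map_add' := fun x y => Subtype.ext (by simp [mul_add])
      map_smul' := fun c x => Subtype.ext (by simp [Matrix.mul_smul]) } with hL
  have hinj : Function.Injective L := by
    intro x y hxy
    have h1 : A * x.1 = A * y.1 := congrArg Subtype.val hxy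
    have h2 : A⁻¹ * (A * x.1) = A⁻¹ * (A * y.1) := by rw [h1]
    rwa [← mul_assoc, ← mul_assoc, Matrix.nonsing_inv_mul A hdet, one_mul, one_mul,
      ← Subtype.ext_iff] at h2
  have hsurj : Function.Surjective L := (LinearMap.injective_iff_surjective).mp hinj
  obtain ⟨x, hx⟩ := hsurj ⟨1, struct_one⟩
  have hx1 : A * x.1 = 1 := congrArg Subtype.val hx
  have : A⁻¹ = x.1 := Matrix.inv_eq_right_inv hx1
  rw [this]; exact x.2

lemma struct_bigA {N d : ℕ} (Δt : ℝ) (𝔸 𝕄 : Matrix (Fin d) (Fin d) ℂ) :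
    Struct (bigA N d Δt 𝔸 𝕄) := by
  refine ⟨fun k => if k = 0 then 𝔸 else ((-1 : ℂ) ^ k * (4 * Complex.I / (Δt : ℂ))) • 𝕄,
    fun n s i j => ?_⟩
  simp only [bigA]
  by_cases h : n = s
  · subst h; simp
  · have h' : (n : ℕ) ≠ (s : ℕ) := fun hc => h (Fin.ext hc)
    rw [if_neg h]
    by_cases h2 : (s : ℕ) ≤ (n : ℕ)
    · have hlt : s < n := by rw [Fin.lt_iff_val_lt_val]; omega
      have h3 : (n : ℕ) - (s : ℕ) ≠ 0 := by omega
      simp [hlt, h2, h3, Matrix.smul_apply, mul_assoc]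
    · have hnl : ¬ s < n := by rw [Fin.lt_iff_val_lt_val]; omega
      simp [hnl, h2]

lemma blockdiag_transpose {N a b : ℕ} (P : Matrix (Fin a) (Fin b) ℂ) :
    (blockdiag N P)ᵀ = blockdiag N Pᵀ := by
  ext x y
  simp only [blockdiag, Matrix.transpose_apply]
  by_cases h : x.1 = y.1
  · rw [if_pos h.symm, if_pos h]
  · rw [if_neg (fun hc => h hc.symm), if_neg h]

/-- Interface blocks for the Robin transmission condition with a
time-independent potential: with `𝐁 = -ip blockdiag(M^Γ)` and `𝐀 - 𝐁` invertible,
`X = α I - 2ip blockdiag(Q_a) (𝐀 - 𝐁)⁻¹ blockdiag(M^Γ) blockdiag(Q_b)ᵀ` is block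
lower triangular and satisfies `x_{n,s} = x_{n-1,s-1}` for all `2 ≤ s ≤ n ≤ N_T`
(here 0-based: `1 ≤ s ≤ n`). -/
theorem robin_interface_block_structure (N_T d N_y : ℕ)
    (hNT : 1 ≤ N_T) (hd : 1 ≤ d) (hNy : 1 ≤ N_y)
    (Δt : ℝ) (hΔt : Δt ≠ 0) (p : ℝ) (α : ℂ)
    (𝔸 𝕄 MΓ : Matrix (Fin d) (Fin d) ℂ)
    (Qa Qb : Matrix (Fin N_y) (Fin d) ℂ)
    (hinv : IsUnit (bigA N_T d Δt 𝔸 𝕄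
      - (-(Complex.I * (p : ℂ))) • blockdiag N_T MΓ)) :
    IsBlockLowerTriangular
      (α • (1 : Matrix (Fin N_T × Fin N_y) (Fin N_T × Fin N_y) ℂ)
        - (2 * Complex.I * (p : ℂ)) •
          (blockdiag N_T Qa
            * (bigA N_T d Δt 𝔸 𝕄 - (-(Complex.I * (p : ℂ))) • blockdiag N_T MΓ)⁻¹
            * blockdiag N_T MΓ * (blockdiag N_T Qb)ᵀ))
    ∧ ∀ (n s : Fin N_T) (i j : Fin N_y), 1 ≤ (s : ℕ) → s ≤ n →
        (α • (1 : Matrix (Fin N_T × Fin N_y) (Fin N_T × Fin N_y) ℂ)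
          - (2 * Complex.I * (p : ℂ)) •
            (blockdiag N_T Qa
              * (bigA N_T d Δt 𝔸 𝕄 - (-(Complex.I * (p : ℂ))) • blockdiag N_T MΓ)⁻¹
              * blockdiag N_T MΓ * (blockdiag N_T Qb)ᵀ)) (n, i) (s, j)
        = (α • (1 : Matrix (Fin N_T × Fin N_y) (Fin N_T × Fin N_y) ℂ)
            - (2 * Complex.I * (p : ℂ)) •
              (blockdiag N_T Qa
                * (bigA N_T d Δt 𝔸 𝕄 - (-(Complex.I * (p : ℂ))) • blockdiag N_T MΓ)⁻¹
                * blockdiag N_T MΓ * (blockdiag N_T Qb)ᵀ))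
            (⟨(n : ℕ) - 1, Nat.lt_of_le_of_lt (Nat.sub_le _ _) n.isLt⟩, i)
            (⟨(s : ℕ) - 1, Nat.lt_of_le_of_lt (Nat.sub_le _ _) s.isLt⟩, j) := by
  set A := bigA N_T d Δt 𝔸 𝕄 - (-(Complex.I * (p : ℂ))) • blockdiag N_T MΓ with hAdef
  have hsA : Struct A := (struct_bigA Δt 𝔸 𝕄).sub ((struct_blockdiag MΓ).smul)
  have hX : Struct (α • (1 : Matrix (Fin N_T × Fin N_y) (Fin N_T × Fin N_y) ℂ)
      - (2 * Complex.I * (p : ℂ)) •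
        (blockdiag N_T Qa * A⁻¹ * blockdiag N_T MΓ * (blockdiag N_T Qb)ᵀ)) := by
    refine (struct_one.smul).sub (Struct.smul ?_)
    rw [blockdiag_transpose]
    exact (((struct_blockdiag Qa).mul (hsA.inv hinv)).mul
      (struct_blockdiag MΓ)).mul (struct_blockdiag Qbᵀ)
  obtain ⟨f, hf⟩ := hX
  constructor
  · intro n s i j hlt
    rw [hf]
    have hns : ¬ ((s : ℕ) ≤ (n : ℕ)) := by
      have := Fin.lt_iff_val_lt_val.mp hlt; omega
    rw [if_neg hns]
  · intro n s i j h1 h2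
    have hsn : (s : ℕ) ≤ (n : ℕ) := h2
    rw [hf, hf]
    simp only [Fin.val_mk]
    rw [if_pos hsn, if_pos (Nat.sub_le_sub_right hsn 1)]
    congr 1
    omega
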